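/- Let M ≥ 1. If ⁅H, Q (2m+1)⁆ = 0 holds for all m with 1 ≤ m ≤ M, then ⁅Q (k+1), Q (l+1)⁆ = 0 holds for all k, l ≥ 1 with k + l ≤ 2M + 2. (Lemma 1 of the paper.) -/
import Mathlib


/-- Lemma 1 of the paper: In a Lie ring `L`, with `Q 2 = H` and
`Q (n+1) = ⁅B, Q n⁆` for `n ≥ 2`, if `⁅H, Q (2m+1)⁆ = 0` for all `1 ≤ m ≤ M`,
then `⁅Q (k+1), Q (l+1)⁆ = 0` for all `k, l ≥ 1` with `k + l ≤ 2M + 2`. -/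
theorem property_boost {L : Type*} [LieRing L] (B H : L)
    (Q : ℕ → L) (hQ2 : Q 2 = H)
    (hQrec : ∀ n, 2 ≤ n → Q (n + 1) = ⁅B, Q n⁆)
    (M : ℕ) (hM : 1 ≤ M)
    (h : ∀ m, 1 ≤ m → m ≤ M → ⁅H, Q (2 * m + 1)⁆ = 0) :
    ∀ k l, 1 ≤ k → 1 ≤ l → k + l ≤ 2 * M + 2 → ⁅Q (k + 1), Q (l + 1)⁆ = 0 := by
  -- key recurrence
  have hrec : ∀ k l : ℕ, 1 ≤ k → 1 ≤ l →
      ⁅Q (k + 2), Q (l + 1)⁆ = ⁅B, ⁅Q (k + 1), Q (l + 1)⁆⁆ - ⁅Q (k + 1), Q (l + 2)⁆ := by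
    intro k l hk hl
    have h1 : Q (k + 2) = ⁅B, Q (k + 1)⁆ := hQrec (k + 1) (by omega)
    have h2 : Q (l + 2) = ⁅B, Q (l + 1)⁆ := hQrec (l + 1) (by omega)
    rw [h1, h2, lie_lie]
  have main : ∀ s, s ≤ 2 * M + 2 → ∀ k l, 1 ≤ k → 1 ≤ l → k + l = s →
      ⁅Q (k + 1), Q (l + 1)⁆ = 0 := by
    intro s
    induction s using Nat.strong_induction_on with
    | _ s sih =>
      intro hs k l hk hl hkl
      rcases Nat.lt_or_ge s 3 with h3 | h3
      · -- s = 2, so k = l = 1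
        have hk1 : k = 1 := by omega
        have hl1 : l = 1 := by omega
        subst hk1 hl1
        exact lie_self _
      · -- alternation along the antidiagonal of sum s
        have alt : ∀ j l', 1 ≤ l' → j + 1 + l' = s →
            ⁅Q (j + 2), Q (l' + 1)⁆ = (-1 : ℤ) ^ j • ⁅Q 2, Q s⁆ := by
          intro j
          induction j with
          | zero =>
            intro l' hl' hsum
            have : l' + 1 = s := by omega
            rw [this]
            simp
          | succ j ih =>
            intro l' hl' hsum
            have hz : ⁅Q (j + 1 + 1), Q (l' + 1)⁆ = 0 :=
              sih (s - 1) (by omega) (by omega) (j + 1) l' (by omega) hl' (by omega)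
            have := hrec (j + 1) l' (by omega) hl'
            rw [hz, lie_zero, zero_sub] at this
            have hih := ih (l' + 1) (by omega) (by omega)
            rw [show j + 1 + 2 = j + 3 by ring, show j + 1 + 1 = j + 2 by ring] at this
            rw [show l' + 1 + 1 = l' + 2 by ring] at hih
            rw [show j + 1 + 2 = j + 3 by ring, this, hih, pow_succ, mul_neg_one, neg_smul]
        -- the endpoint value is zero
        have hT : ⁅Q 2, Q s⁆ = 0 := by
          rcases Nat.even_or_odd s with ⟨m, hm⟩ | ⟨m, hm⟩
          · -- s = 2m even, use antisymmetry at the middle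
            have hm2 : 2 ≤ m := by omega
            have := alt (m - 1) m (by omega) (by omega)
            rw [show m - 1 + 2 = m + 1 by omega, lie_self] at this
            rcases Nat.even_or_odd (m - 1) with he | ho
            · rw [he.neg_one_pow, one_smul] at this
              exact this.symm
            · rw [ho.neg_one_pow, neg_smul, one_smul, eq_comm, neg_eq_zero] at this
              exact this
          · -- s = 2m + 1 odd, use the hypothesis
            have hm1 : 1 ≤ m := by omega
            have hmM : m ≤ M := by omega
            rw [hm, hQ2]
            exact h m hm1 hmM
        have := alt (k - 1) l (by omega) (by omega)
        rw [show k - 1 + 2 = k + 1 by omega, hT, smul_zero] at this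
        exact this
  intro k l hk hl hsum
  exact main (k + l) hsum k l hk hl rfl
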